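/- Let (Ω, ℙ) be a probability space, (X_n)_{n≥1} real random variables, and Y a real random variable with ℙ(Y = 0) < 1 such that Y is independent of X_n for every n. Let (S_n)_{n≥1} be real random variables such that S_n has the same distribution as X_n · Y for every n. Let (a_n) be positive numbers with d_n := E|Y|^{a_n} < ∞ for every n, let (b_n) be positive numbers with b_n → ∞, and suppose limsup_{n→∞} b_n^{−1} E(|S_n|^{a_n}) = c for some c ∈ (0, ∞). Then for every sequence (c_n) of positive numbers with ∑_{n=1}^∞ c_n^{−1} < ∞, one has ℙ( ⋃_{n=1}^∞ ⋂_{k=n}^∞ { |X_k| ≤ (c_k b_k / d_k)^{1/a_k} } ) = 1. -/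

import Mathlib

open MeasureTheory Set Filter ENNReal

set_option maxHeartbeats 1000000 in
/-- Magnitude of fluctuations of a random walk under a weak generalized convolution:
if `Y` (not a.s. `0`) is independent of each `X_n`, `S_n =_d X_n · Y`,
`d_n = E|Y|^(a_n) < ∞`, `b_n → ∞`, and `limsup_n b_n⁻¹ E(|S_n|^(a_n)) = c ∈ (0,∞)`,
then for any positive `(c_n)` with `∑ c_n⁻¹ < ∞`, almost surely
`|X_k| ≤ (c_k b_k / d_k)^(1/a_k)` for all large `k`. -/
theorem fluctuations_weak_generalized
    {Ω : Type*} [MeasurableSpace Ω] (ℙ : Measure Ω) [IsProbabilityMeasure ℙ]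
    (X S : ℕ → Ω → ℝ) (Y : Ω → ℝ)
    (hXm : ∀ n, Measurable (X n)) (hSm : ∀ n, Measurable (S n)) (hYm : Measurable Y)
    (hY0 : ℙ {ω | Y ω = 0} < 1)
    (hindep : ∀ n, ProbabilityTheory.IndepFun Y (X n) ℙ)
    (hS : ∀ n, Measure.map (S n) ℙ = Measure.map (fun ω => X n ω * Y ω) ℙ)
    (a b : ℕ → ℝ) (ha : ∀ n, 0 < a n) (hb : ∀ n, 0 < b n)
    (hbtop : Tendsto b atTop atTop)
    (d : ℕ → ℝ≥0∞)
    (hd : ∀ n, d n = ∫⁻ ω, ENNReal.ofReal (|Y ω| ^ a n) ∂ℙ)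
    (hdfin : ∀ n, d n ≠ ⊤)
    (c : ℝ) (hc : 0 < c)
    (hlimsup : Filter.limsup
        (fun n => ENNReal.ofReal (b n)⁻¹ * ∫⁻ ω, ENNReal.ofReal (|S n ω| ^ a n) ∂ℙ)
        atTop = ENNReal.ofReal c)
    (cs : ℕ → ℝ) (hcs : ∀ n, 0 < cs n) (hcs_sum : Summable (fun n => (cs n)⁻¹)) :
    ℙ (⋃ n : ℕ, ⋂ k : ℕ, ⋂ _ : n ≤ k,
        {ω | |X k ω| ≤ (cs k * b k / (d k).toReal) ^ (1 / a k)}) = 1 := by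
  classical
  -- notation
  set q : ℕ → ℝ := fun k => cs k * b k / (d k).toReal with hq
  set bad : ℕ → Set Ω := fun k => {ω | q k ^ (1 / a k) < |X k ω|} with hbad
  have hbadm : ∀ k, MeasurableSet (bad k) := fun k =>
    measurableSet_lt measurable_const (hXm k).abs
  -- d k is positive
  have hdpos : ∀ k, 0 < d k := by
    intro k
    rw [hd k]
    have hmY : Measurable fun ω => ENNReal.ofReal (|Y ω| ^ a k) :=
      (hYm.abs.pow_const (a k)).ennreal_ofReal
    rw [lintegral_pos_iff_support hmY]
    have hsupp : Function.support (fun ω => ENNReal.ofReal (|Y ω| ^ a k)) = {ω | Y ω = 0}ᶜ := by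
      ext ω
      simp only [Function.mem_support, ne_eq, mem_compl_iff, mem_setOf_eq,
        ENNReal.ofReal_eq_zero, not_le]
      constructor
      · intro h h0
        rw [h0] at h
        simp [Real.zero_rpow (ha k).ne'] at h
      · intro h
        exact Real.rpow_pos_of_pos (abs_pos.mpr h) _
    rw [hsupp]
    have := prob_compl_eq_one_sub (μ := ℙ) (hYm (measurableSet_singleton (0:ℝ)))
    have hset : (Y ⁻¹' {(0:ℝ)}) = {ω | Y ω = 0} := by ext ω; simp
    rw [hset] at this
    rw [this]
    exact tsub_pos_iff_lt.mpr hY0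
  have hdtoRealpos : ∀ k, 0 < (d k).toReal := fun k =>
    ENNReal.toReal_pos (hdpos k).ne' (hdfin k)
  have hqpos : ∀ k, 0 < q k := fun k =>
    div_pos (mul_pos (hcs k) (hb k)) (hdtoRealpos k)
  -- the integral of |S k|^{a k}
  set L : ℕ → ℝ≥0∞ := fun k => ∫⁻ ω, ENNReal.ofReal (|S k ω| ^ a k) ∂ℙ with hLdef
  set E : ℕ → ℝ≥0∞ := fun k => ∫⁻ ω, ENNReal.ofReal (|X k ω| ^ a k) ∂ℙ with hEdef
  have hL : ∀ k, L k = E k * d k := by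
    intro k
    have hg : Measurable fun x : ℝ => ENNReal.ofReal (|x| ^ a k) :=
      (measurable_abs.pow_const (a k)).ennreal_ofReal
    have h1 : L k = ∫⁻ ω, ENNReal.ofReal (|X k ω * Y ω| ^ a k) ∂ℙ := by
      calc L k = ∫⁻ x, ENNReal.ofReal (|x| ^ a k) ∂(Measure.map (S k) ℙ) := by
              rw [lintegral_map hg (hSm k)]
        _ = ∫⁻ x, ENNReal.ofReal (|x| ^ a k) ∂(Measure.map (fun ω => X k ω * Y ω) ℙ) := by
              rw [hS k]
        _ = ∫⁻ ω, ENNReal.ofReal (|X k ω * Y ω| ^ a k) ∂ℙ := by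
              exact lintegral_map hg ((hXm k).mul hYm)
    have h2 : ∀ ω, ENNReal.ofReal (|X k ω * Y ω| ^ a k)
        = ENNReal.ofReal (|X k ω| ^ a k) * ENNReal.ofReal (|Y ω| ^ a k) := by
      intro ω
      rw [abs_mul, Real.mul_rpow (abs_nonneg _) (abs_nonneg _),
        ENNReal.ofReal_mul (Real.rpow_nonneg (abs_nonneg _) _)]
    have hind : ProbabilityTheory.IndepFun
        (fun ω => ENNReal.ofReal (|X k ω| ^ a k))
        (fun ω => ENNReal.ofReal (|Y ω| ^ a k)) ℙ := by
      have := ((hindep k).symm).comp hg hg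
      exact this
    have hmul := ProbabilityTheory.lintegral_mul_eq_lintegral_mul_lintegral_of_indepFun''
      (μ := ℙ) (f := fun ω => ENNReal.ofReal (|X k ω| ^ a k))
      (g := fun ω => ENNReal.ofReal (|Y ω| ^ a k))
      ((hg.comp (hXm k)).aemeasurable) ((hg.comp hYm).aemeasurable) hind
    rw [h1, lintegral_congr h2, hmul, hd k]
  -- Chebyshev bound
  have hcheb : ∀ k, ENNReal.ofReal (cs k * b k) * ℙ (bad k) ≤ L k := by
    intro k
    have hmX : Measurable fun ω => ENNReal.ofReal (|X k ω| ^ a k) :=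
      ((hXm k).abs.pow_const (a k)).ennreal_ofReal
    have hsub : bad k ⊆ {ω | ENNReal.ofReal (q k) ≤ ENNReal.ofReal (|X k ω| ^ a k)} := by
      intro ω hω
      have hlt : q k ^ (1 / a k) < |X k ω| := hω
      have h0 : (0:ℝ) ≤ q k ^ (1 / a k) := Real.rpow_nonneg (hqpos k).le _
      have : (q k ^ (1 / a k)) ^ a k ≤ |X k ω| ^ a k :=
        Real.rpow_le_rpow h0 hlt.le (ha k).le
      rw [show ((q k ^ (1 / a k)) ^ a k : ℝ) = q k by
        rw [← Real.rpow_mul (hqpos k).le, one_div, inv_mul_cancel₀ (ha k).ne', Real.rpow_one]]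
        at this
      exact ENNReal.ofReal_le_ofReal this
    have h1 : ENNReal.ofReal (q k) * ℙ (bad k)
        ≤ ENNReal.ofReal (q k) * ℙ {ω | ENNReal.ofReal (q k) ≤ ENNReal.ofReal (|X k ω| ^ a k)} :=
      mul_le_mul_right (measure_mono hsub) _
    have h2 := mul_meas_ge_le_lintegral (μ := ℙ) hmX (ENNReal.ofReal (q k))
    have h3 : ENNReal.ofReal (q k) * ℙ (bad k) ≤ E k := h1.trans h2
    have h4 : ENNReal.ofReal (q k) * ℙ (bad k) * d k ≤ E k * d k :=
      mul_le_mul_left h3 _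
    have h5 : ENNReal.ofReal (q k) * d k = ENNReal.ofReal (cs k * b k) := by
      conv_lhs => rw [← ENNReal.ofReal_toReal (hdfin k)]
      rw [← ENNReal.ofReal_mul (hqpos k).le]
      congr 1
      exact div_mul_cancel₀ _ (hdtoRealpos k).ne'
    calc ENNReal.ofReal (cs k * b k) * ℙ (bad k)
        = ENNReal.ofReal (q k) * ℙ (bad k) * d k := by
          rw [mul_right_comm (ENNReal.ofReal (q k)) (ℙ (bad k)) (d k), h5]
      _ ≤ E k * d k := h4
      _ = L k := (hL k).symm
  -- eventual bound on L from the limsup hypothesis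
  have hev : ∀ᶠ k in atTop, L k ≤ (ENNReal.ofReal c + 1) * ENNReal.ofReal (b k) := by
    have hfe : (fun n => ENNReal.ofReal (b n)⁻¹ * L n)
        = fun n => (ENNReal.ofReal (b n))⁻¹ * L n := by
      funext n
      rw [ENNReal.ofReal_inv_of_pos (hb n)]
    have hlt : limsup (fun n => (ENNReal.ofReal (b n))⁻¹ * L n) atTop
        < ENNReal.ofReal c + 1 := by
      rw [← hfe, hlimsup]
      exact ENNReal.lt_add_right ENNReal.ofReal_ne_top one_ne_zero
    filter_upwards [eventually_lt_of_limsup_lt hlt] with k hk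
    have hbne : ENNReal.ofReal (b k) ≠ 0 := by
      simp [ENNReal.ofReal_eq_zero, not_le, hb k]
    have : ENNReal.ofReal (b k) * ((ENNReal.ofReal (b k))⁻¹ * L k)
        ≤ ENNReal.ofReal (b k) * (ENNReal.ofReal c + 1) := mul_le_mul_right hk.le _
    rwa [← mul_assoc, ENNReal.mul_inv_cancel hbne ENNReal.ofReal_ne_top, one_mul,
      mul_comm (ENNReal.ofReal (b k))] at this
  -- bound the probabilities of bad events, eventually
  have hbound : ∀ᶠ k in atTop,
      ℙ (bad k) ≤ (ENNReal.ofReal c + 1) * ENNReal.ofReal (cs k)⁻¹ := by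
    filter_upwards [hev] with k hk
    have hbne : ENNReal.ofReal (b k) ≠ 0 := by
      simp [ENNReal.ofReal_eq_zero, not_le, hb k]
    have hcne : ENNReal.ofReal (cs k) ≠ 0 := by
      simp [ENNReal.ofReal_eq_zero, not_le, hcs k]
    have h1 : ENNReal.ofReal (cs k) * ENNReal.ofReal (b k) * ℙ (bad k)
        ≤ (ENNReal.ofReal c + 1) * ENNReal.ofReal (b k) := by
      rw [← ENNReal.ofReal_mul (hcs k).le]
      exact (hcheb k).trans hk
    have h2 : ℙ (bad k) * ENNReal.ofReal (cs k) ≤ ENNReal.ofReal c + 1 := by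
      rw [← ENNReal.mul_le_mul_iff_left hbne ENNReal.ofReal_ne_top]
      calc ℙ (bad k) * ENNReal.ofReal (cs k) * ENNReal.ofReal (b k)
          = ENNReal.ofReal (cs k) * ENNReal.ofReal (b k) * ℙ (bad k) := by ring
        _ ≤ (ENNReal.ofReal c + 1) * ENNReal.ofReal (b k) := h1
    rw [ENNReal.ofReal_inv_of_pos (hcs k), ← div_eq_mul_inv]
    exact (ENNReal.le_div_iff_mul_le (Or.inl hcne) (Or.inl ENNReal.ofReal_ne_top)).mpr h2
  -- the series of probabilities converges
  have hsum : ∑' k, ℙ (bad k) ≠ ⊤ := by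
    obtain ⟨N, hN⟩ := eventually_atTop.mp hbound
    rw [← Summable.sum_add_tsum_nat_add' (f := fun k => ℙ (bad k)) (k := N) ENNReal.summable]
    have hfin1 : (∑ i ∈ Finset.range N, ℙ (bad i)) ≠ ⊤ := by
      refine (ENNReal.sum_lt_top.mpr fun i _ => ?_).ne
      exact (measure_lt_top ℙ _)
    have hfin2 : (∑' i : ℕ, ℙ (bad (i + N))) ≠ ⊤ := by
      have hle : ∑' i : ℕ, ℙ (bad (i + N))
          ≤ ∑' i : ℕ, (ENNReal.ofReal c + 1) * ENNReal.ofReal (cs (i + N))⁻¹ :=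
        ENNReal.tsum_le_tsum fun i => hN (i + N) (Nat.le_add_left N i)
      refine ne_top_of_le_ne_top ?_ hle
      rw [ENNReal.tsum_mul_left]
      refine ENNReal.mul_ne_top (ENNReal.add_ne_top.mpr ⟨ENNReal.ofReal_ne_top, one_ne_top⟩) ?_
      have hs : Summable (fun i : ℕ => (cs (i + N))⁻¹) :=
        ((summable_nat_add_iff N).mpr hcs_sum)
      rw [← ENNReal.ofReal_tsum_of_nonneg (fun i => inv_nonneg.mpr (hcs _).le) hs]
      exact ENNReal.ofReal_ne_top
    exact ENNReal.add_ne_top.mpr ⟨hfin1, hfin2⟩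
  -- Borel–Cantelli
  have hBC : ℙ (limsup bad atTop) = 0 := measure_limsup_atTop_eq_zero hsum
  have hls : limsup bad atTop = ⋂ n : ℕ, ⋃ k : ℕ, ⋃ _ : n ≤ k, bad k := by
    rw [limsup_eq_iInf_iSup_of_nat]
    simp only [iInf_eq_iInter, iSup_eq_iUnion]
  have hcompl : (⋃ n : ℕ, ⋂ k : ℕ, ⋂ _ : n ≤ k,
      {ω | |X k ω| ≤ (cs k * b k / (d k).toReal) ^ (1 / a k)})
      = (⋂ n : ℕ, ⋃ k : ℕ, ⋃ _ : n ≤ k, bad k)ᶜ := by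
    rw [compl_iInter]
    refine iUnion_congr fun n => ?_
    rw [compl_iUnion]
    refine iInter_congr fun k => ?_
    rw [compl_iUnion]
    refine iInter_congr fun _ => ?_
    ext ω
    simp [hbad, hq, not_lt]
  rw [hcompl, prob_compl_eq_one_iff]
  · rw [← hls]; exact hBC
  · exact MeasurableSet.iInter fun n => MeasurableSet.iUnion fun k =>
      MeasurableSet.iUnion fun _ => hbadm k
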